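/- Let α, β ∈ ℂ satisfy α² ∉ {0,1}, β² ∉ {0,1}, α² ≠ β², α²β² ≠ 1, and let r ∈ ℂ with r² = (1−α²)(1−β²). For (x,y) on the curve y² = x(x−1)(x−α²)(x−β²)(x−α²β²) with x ∉ {α², β², αβ}, the composition of φ₁(x,y) = ((α−β)²x/(x−αβ)², (α−β)²y/((αβ−1)(x−αβ)³)) followed by ξ₊(X,Y) = (X/(κ₁²(X−1)), (1−αβ)rY/((α−β)²(X−1)²)), where κ₁² = −(α−β)²/((1−α²)(1−β²)), equals π₊(x,y) = ((1−α²)(1−β²)x/((x−α²)(x−β²)), −r(x−αβ)y/((x−α²)²(x−β²)²)). -/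

import Mathlib

theorem stmt_6 (α β κ₁ r x y : ℂ)
    (hα0 : α^2 ≠ 0) (hα1 : α^2 ≠ 1) (hβ0 : β^2 ≠ 0) (hβ1 : β^2 ≠ 1)
    (hαβ : α^2 ≠ β^2) (hαβ1 : α^2 * β^2 ≠ 1)
    (hκ : κ₁^2 = -((α - β)^2) / ((1 - α^2) * (1 - β^2)))
    (hr : r^2 = (1 - α^2) * (1 - β^2))
    (hV : y^2 = x * (x - 1) * (x - α^2) * (x - β^2) * (x - α^2 * β^2))
    (hx1 : x ≠ α^2) (hx2 : x ≠ β^2) (hx3 : x ≠ α * β) :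
    (let X := (α - β)^2 * x / (x - α * β)^2;
     let Y := (α - β)^2 * y / ((α * β - 1) * (x - α * β)^3);
     (X / (κ₁^2 * (X - 1)), (1 - α * β) * r * Y / ((α - β)^2 * (X - 1)^2))) =
    ((1 - α^2) * (1 - β^2) * x / ((x - α^2) * (x - β^2)),
     -(r * (x - α * β) * y) / ((x - α^2)^2 * (x - β^2)^2)) := by
  have hab : α - β ≠ 0 := fun h => hαβ (by rw [sub_eq_zero] at h; rw [h])
  have hxab : x - α * β ≠ 0 := sub_ne_zero.mpr hx3
  have h1a : (1:ℂ) - α^2 ≠ 0 := fun h => hα1 (by linear_combination -h)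
  have h1b : (1:ℂ) - β^2 ≠ 0 := fun h => hβ1 (by linear_combination -h)
  have hab1 : α * β - 1 ≠ 0 := fun h => hαβ1 (by linear_combination (α*β+1)*h)
  have hA : x - α^2 ≠ 0 := sub_ne_zero.mpr hx1
  have hB : x - β^2 ≠ 0 := sub_ne_zero.mpr hx2
  have hκ2 : κ₁^2 ≠ 0 := by
    rw [hκ]
    exact div_ne_zero (neg_ne_zero.mpr (pow_ne_zero 2 hab)) (mul_ne_zero h1a h1b)
  have hX1 : (α - β)^2 * x / (x - α * β)^2 - 1 = -((x - α^2) * (x - β^2)) / (x - α * β)^2 := by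
    field_simp
    ring
  simp only []
  rw [hX1, hκ]
  have hne : -((x - α^2) * (x - β^2)) / (x - α * β)^2 ≠ 0 := by
    exact div_ne_zero (neg_ne_zero.mpr (mul_ne_zero hA hB)) (pow_ne_zero 2 hxab)
  rw [Prod.mk.injEq]
  constructor
  · field_simp
  · field_simp
    ring
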